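/- arXiv:2007.04346 — 2 statements merged into one kernel-verified Lean document; each statement's English description precedes it below -/
import Mathlib

section
/- The function S(z,p) = (2z-1)·ln(p/(1-p)) - (z-p)·(1/p - 1/(1-p)) with p = L(t) = 1/(1+e^{-t}), viewed as a function of t ∈ ℝ for fixed z ∈ {0,1}, is concave in t. -/
/-- The standard logistic cumulative distribution function. -/
noncomputable def logisticCDF (t : ℝ) : ℝ := 1 / (1 + Real.exp (-t))

/-- The tailored (negative) loss `S(z, L(t))` used for covariate-balancing estimation of
instrument propensity scores, viewed as a function of the index `t`. -/
noncomputable def tailoredLoss (z t : ℝ) : ℝ :=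
  (2 * z - 1) * Real.log (logisticCDF t / (1 - logisticCDF t)) -
    (z - logisticCDF t) * (1 / logisticCDF t - 1 / (1 - logisticCDF t))

lemma convexOn_exp_mul (a : ℝ) : ConvexOn ℝ Set.univ (fun t : ℝ => Real.exp (a * t)) := by
  have h := convexOn_exp.comp_affineMap (a • AffineMap.id ℝ ℝ)
  simpa [Function.comp_def, Set.preimage_univ] using h

lemma key (z : ℝ) (hz : z = 0 ∨ z = 1) (t : ℝ) :
    tailoredLoss z t = (2 * z - 1) * t - Real.exp ((1 - 2 * z) * t) + 1 := by
  have he : Real.exp (-t) > 0 := Real.exp_pos _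
  have h1 : (0:ℝ) < 1 + Real.exp (-t) := by linarith
  have hL : logisticCDF t = 1 / (1 + Real.exp (-t)) := rfl
  have hrat : logisticCDF t / (1 - logisticCDF t) = Real.exp t := by
    rw [hL, Real.exp_neg]
    have hept : (0:ℝ) < Real.exp t := Real.exp_pos t
    field_simp
    ring
  have hlog : Real.log (logisticCDF t / (1 - logisticCDF t)) = t := by
    rw [hrat, Real.log_exp]
  rw [tailoredLoss, hlog]
  rcases hz with h | h <;> subst h
  · have : (0 - logisticCDF t) * (1 / logisticCDF t - 1 / (1 - logisticCDF t))
        = Real.exp t - 1 := by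
      rw [hL]
      have het : Real.exp (-t) = (Real.exp t)⁻¹ := Real.exp_neg t
      have hept : (0:ℝ) < Real.exp t := Real.exp_pos t
      rw [het]
      field_simp
      ring
    rw [this]; ring_nf
  · have : (1 - logisticCDF t) * (1 / logisticCDF t - 1 / (1 - logisticCDF t))
        = Real.exp (-t) - 1 := by
      rw [hL]
      field_simp
      ring
    rw [this]; ring_nf

/-- for each `z ∈ {0,1}`, the tailored loss `t ↦ S(z, L(t))` is concave on ℝ. -/
theorem stmt_2 (z : ℝ) (hz : z = 0 ∨ z = 1) :
    ConcaveOn ℝ Set.univ (fun t => tailoredLoss z t) := by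
  have heq : (fun t => tailoredLoss z t)
      = fun t => ((2 * z - 1) * t + 1) + (-Real.exp ((1 - 2 * z) * t)) := by
    funext t; rw [key z hz t]; ring
  rw [heq]
  apply ConcaveOn.add
  · have := ((2 * z - 1) • LinearMap.id : ℝ →ₗ[ℝ] ℝ).concaveOn convex_univ
    have h2 := this.add (concaveOn_const (1:ℝ) convex_univ)
    exact h2
  · exact (convexOn_exp_mul (1 - 2 * z)).neg
end

section
/- Under assumptions A.1 (conditional independence), A.2 (exclusion), A.5 (strong overlap δ < π(X) < 1-δ), and integrability, the LATE identification identity holds: E[ZY/π(X)] - E[(1-Z)Y/(1-π(X))] = E[(D(1)-D(0))·(Y(1)-Y(0))] and E[ZD/π(X)] - E[(1-Z)D/(1-π(X))] = E[D(1)-D(0)]; consequently if additionally monotonicity D(1) ≥ D(0) a.s. and P(D(1)>D(0)) > 0 hold, the ratio equals E[Y(1)-Y(0) | D(1)>D(0)]. -/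
open MeasureTheory ProbabilityTheory
open scoped ENNReal NNReal

section IPWAux

variable {Ω α β : Type*} [MeasurableSpace Ω] [StandardBorelSpace Ω]
  [MeasurableSpace α] [MeasurableSpace β]

lemma ipw_map_eq (μ : Measure Ω) [IsProbabilityMeasure μ]
    (X : Ω → α) (Z : Ω → ℝ) (W : Ω → β) (π : α → ℝ)
    (hX : Measurable X) (hZm : Measurable Z) (hWm : Measurable W) (hπ : Measurable π)
    (hZ01 : ∀ ω, Z ω = 0 ∨ Z ω = 1)
    (hπ01 : ∀ x, 0 ≤ π x ∧ π x ≤ 1)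
    (hcond : μ[Z | MeasurableSpace.comap X inferInstance] =ᵐ[μ] fun ω => π (X ω))
    (hci : CondIndepFun (MeasurableSpace.comap X inferInstance) hX.comap_le W Z μ) :
    Measure.map (fun ω => (X ω, W ω)) (μ.restrict (Z ⁻¹' {1}))
      = Measure.map (fun ω => (X ω, W ω))
          (μ.withDensity (fun ω => ENNReal.ofReal (π (X ω)))) := by
  have hle := hX.comap_le
  haveI : SigmaFinite (μ.trim hle) := inferInstance
  set A : Set Ω := Z ⁻¹' {1} with hAdef
  have hA : MeasurableSet A := hZm (measurableSet_singleton 1)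
  have hV : Measurable (fun ω => (X ω, W ω)) := hX.prodMk hWm
  have hXm' : Measurable[MeasurableSpace.comap X inferInstance] X := fun s hs => ⟨s, hs, rfl⟩
  have hπX' : Measurable[MeasurableSpace.comap X inferInstance] (fun ω => π (X ω)) :=
    hπ.comp hXm'
  have hπX : Measurable (fun ω => π (X ω)) := hπ.comp hX
  have hπXb : Integrable (fun ω => π (X ω)) μ :=
    (integrable_const (1:ℝ)).mono' (hπX.aestronglyMeasurable)
      (ae_of_all μ fun ω => by
        rw [Real.norm_eq_abs, abs_le]
        exact ⟨by linarith [(hπ01 (X ω)).1], (hπ01 (X ω)).2⟩)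
  have h1A : A.indicator (fun _ => (1:ℝ)) = Z := by
    funext ω
    rcases hZ01 ω with h | h <;> simp [Set.indicator_apply, hAdef, h]
  have key : ∀ E B, MeasurableSet E → MeasurableSet B →
      μ (X ⁻¹' E ∩ W ⁻¹' B ∩ A)
        = ∫⁻ ω in X ⁻¹' E ∩ W ⁻¹' B, ENNReal.ofReal (π (X ω)) ∂μ := by
    intro E B hE hB
    have hE' : MeasurableSet[MeasurableSpace.comap X inferInstance] (X ⁻¹' E) := ⟨E, hE, rfl⟩
    have hB' : MeasurableSet (W ⁻¹' B) := hWm hB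
    have hindB : Integrable ((W ⁻¹' B).indicator (fun _ => (1:ℝ))) μ :=
      (integrable_const (1:ℝ)).indicator hB'
    have hindBA : Integrable ((W ⁻¹' B ∩ A).indicator (fun _ => (1:ℝ))) μ :=
      (integrable_const (1:ℝ)).indicator (hB'.inter hA)
    have hfact := ((condIndepFun_iff_condExp_inter_preimage_eq_mul (hm' := hle)
      hWm hZm).mp hci) B {1} hB (measurableSet_singleton 1)
    have hcondA : (μ⟦A | MeasurableSpace.comap X inferInstance⟧) =ᵐ[μ] fun ω => π (X ω) := by
      rw [hAdef, show (Z ⁻¹' {1}).indicator (fun _ => (1:ℝ)) = Z from h1A]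
      exact hcond
    have hmulint : Integrable ((fun ω => π (X ω)) * (W ⁻¹' B).indicator (fun _ => (1:ℝ))) μ :=
      hindB.bdd_mul (c := 1) hπX.aestronglyMeasurable
        (ae_of_all μ fun ω => by
          rw [Real.norm_eq_abs, abs_le]
          exact ⟨by linarith [(hπ01 (X ω)).1], (hπ01 (X ω)).2⟩)
    have hpull := condExp_mul_of_stronglyMeasurable_left (m := MeasurableSpace.comap X inferInstance)
      (μ := μ) hπX'.stronglyMeasurable hmulint hindB
    have hreal : (μ (X ⁻¹' E ∩ (W ⁻¹' B ∩ A))).toReal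
        = ∫ ω in X ⁻¹' E ∩ W ⁻¹' B, π (X ω) ∂μ := by
      calc (μ (X ⁻¹' E ∩ (W ⁻¹' B ∩ A))).toReal
          = ∫ ω in X ⁻¹' E, (W ⁻¹' B ∩ A).indicator (fun _ => (1:ℝ)) ω ∂μ := by
            rw [setIntegral_indicator (hB'.inter hA), setIntegral_const, smul_eq_mul, mul_one, measureReal_def]
        _ = ∫ ω in X ⁻¹' E, (μ⟦W ⁻¹' B ∩ A | MeasurableSpace.comap X inferInstance⟧) ω ∂μ :=
            (setIntegral_condExp hle hindBA hE').symm
        _ = ∫ ω in X ⁻¹' E,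
              (μ⟦W ⁻¹' B | MeasurableSpace.comap X inferInstance⟧) ω * π (X ω) ∂μ := by
            refine setIntegral_congr_ae (hle _ hE') ?_
            filter_upwards [hfact, hcondA] with ω h1 h2 _
            rw [h1, h2]
        _ = ∫ ω in X ⁻¹' E,
              (μ[(fun ω => π (X ω)) * (W ⁻¹' B).indicator (fun _ => (1:ℝ)) |
                MeasurableSpace.comap X inferInstance]) ω ∂μ := by
            refine setIntegral_congr_ae (hle _ hE') ?_
            filter_upwards [hpull] with ω h1 _
            rw [h1]; simp [mul_comm]
        _ = ∫ ω in X ⁻¹' E, π (X ω) * (W ⁻¹' B).indicator (fun _ => (1:ℝ)) ω ∂μ :=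
            setIntegral_condExp hle hmulint hE'
        _ = ∫ ω in X ⁻¹' E, (W ⁻¹' B).indicator (fun ω => π (X ω)) ω ∂μ := by
            refine setIntegral_congr_ae (hle _ hE') (ae_of_all μ fun ω _ => ?_)
            by_cases h : ω ∈ W ⁻¹' B <;> simp [Set.indicator_apply, h]
        _ = ∫ ω in X ⁻¹' E ∩ W ⁻¹' B, π (X ω) ∂μ := setIntegral_indicator hB'
    have hint : Integrable (fun ω => π (X ω)) (μ.restrict (X ⁻¹' E ∩ W ⁻¹' B)) :=
      hπXb.restrict
    rw [← Set.inter_assoc] at hreal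
    rw [← ofReal_integral_eq_lintegral_ofReal hint
      (ae_of_all _ fun ω => (hπ01 (X ω)).1), ← hreal,
      ENNReal.ofReal_toReal (measure_ne_top μ _)]
  haveI : IsFiniteMeasure (Measure.map (fun ω => (X ω, W ω)) (μ.restrict A)) := by
    constructor
    rw [Measure.map_apply hV MeasurableSet.univ]
    exact measure_lt_top (μ.restrict A) _
  refine ext_of_generate_finite _ generateFrom_prod.symm isPiSystem_prod ?_ ?_
  · rintro s ⟨E, hE, B, hB, rfl⟩
    rw [Measure.map_apply hV (hE.prod hB), Measure.map_apply hV (hE.prod hB),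
      Set.mk_preimage_prod, Measure.restrict_apply (hE.preimage hX |>.inter (hB.preimage hWm)),
      withDensity_apply _ (hE.preimage hX |>.inter (hB.preimage hWm))]
    exact key E B hE hB
  · rw [Measure.map_apply hV MeasurableSet.univ, Measure.map_apply hV MeasurableSet.univ,
      Set.preimage_univ, Measure.restrict_apply MeasurableSet.univ,
      withDensity_apply _ MeasurableSet.univ, Set.univ_inter]
    have := key Set.univ Set.univ MeasurableSet.univ MeasurableSet.univ
    simpa using this

lemma ipw_integral (μ : Measure Ω) [IsProbabilityMeasure μ]
    (X : Ω → α) (Z : Ω → ℝ) (W : Ω → β) (π : α → ℝ)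
    (hX : Measurable X) (hZm : Measurable Z) (hWm : Measurable W) (hπ : Measurable π)
    (hZ01 : ∀ ω, Z ω = 0 ∨ Z ω = 1)
    (hπ01 : ∀ x, 0 ≤ π x ∧ π x ≤ 1)
    (hcond : μ[Z | MeasurableSpace.comap X inferInstance] =ᵐ[μ] fun ω => π (X ω))
    (hci : CondIndepFun (MeasurableSpace.comap X inferInstance) hX.comap_le W Z μ)
    (F : α × β → ℝ) (hF : Measurable F) :
    ∫ ω, Z ω * F (X ω, W ω) ∂μ = ∫ ω, π (X ω) * F (X ω, W ω) ∂μ := by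
  have hV : Measurable (fun ω => (X ω, W ω)) := hX.prodMk hWm
  have hA : MeasurableSet (Z ⁻¹' {1}) := hZm (measurableSet_singleton 1)
  have h1 : (fun ω => Z ω * F (X ω, W ω))
      = (Z ⁻¹' {1}).indicator (fun ω => F (X ω, W ω)) := by
    funext ω
    rcases hZ01 ω with h | h <;>
      simp [Set.indicator_apply, Set.mem_preimage, h]
  rw [h1, integral_indicator hA,
    ← integral_map hV.aemeasurable hF.aestronglyMeasurable,
    ipw_map_eq μ X Z W π hX hZm hWm hπ hZ01 hπ01 hcond hci,
    integral_map hV.aemeasurable hF.aestronglyMeasurable]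
  have hd : (fun ω => ENNReal.ofReal (π (X ω)))
      = fun ω => ((fun ω => (π (X ω)).toNNReal) ω : ℝ≥0∞) := rfl
  rw [hd, integral_withDensity_eq_integral_smul
    (f := fun ω => (π (X ω)).toNNReal) (by fun_prop) (fun ω => F (X ω, W ω))]
  congr 1
  funext ω
  rw [NNReal.smul_def, Real.coe_toNNReal _ (hπ01 (X ω)).1, smul_eq_mul]

end IPWAux

/-- IPW identification of the LATE (Frölich 2007). Under conditional
independence `(Y(0),Y(1),D(0),D(1)) ⊥ Z | X`, exclusion (built into `Y = DY(1)+(1-D)Y(0)`),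
and strong overlap `δ < π(X) < 1-δ` where `π(X) = P(Z=1|X)`:
`E[ZY/π(X)] - E[(1-Z)Y/(1-π(X))] = E[(D(1)-D(0))(Y(1)-Y(0))]`,
`E[ZD/π(X)] - E[(1-Z)D/(1-π(X))] = E[D(1)-D(0)]`, and, under monotonicity and a nonzero
complier share, the ratio equals `E[Y(1)-Y(0) | D(1)>D(0)]`. -/
theorem stmt_11 {Ω α : Type*} [MeasurableSpace Ω] [StandardBorelSpace Ω] [Nonempty Ω]
    [MeasurableSpace α]
    (μ : Measure Ω) [IsProbabilityMeasure μ]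
    (X : Ω → α) (Z Y0 Y1 D0 D1 : Ω → ℝ) (π : α → ℝ)
    (hX : Measurable X) (hZm : Measurable Z) (hY0m : Measurable Y0) (hY1m : Measurable Y1)
    (hD0m : Measurable D0) (hD1m : Measurable D1) (hπ : Measurable π)
    (hZ01 : ∀ ω, Z ω = 0 ∨ Z ω = 1)
    (hD0b : ∀ ω, D0 ω = 0 ∨ D0 ω = 1) (hD1b : ∀ ω, D1 ω = 0 ∨ D1 ω = 1)
    (δ : ℝ) (hδ : 0 < δ) (hπδ : ∀ x, δ < π x ∧ π x < 1 - δ)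
    (hY0int : Integrable Y0 μ) (hY1int : Integrable Y1 μ)
    (hcond : μ[Z | MeasurableSpace.comap X inferInstance] =ᵐ[μ] fun ω => π (X ω))
    (hci : CondIndepFun (MeasurableSpace.comap X inferInstance) hX.comap_le
      (fun ω => (Y0 ω, Y1 ω, D0 ω, D1 ω)) Z μ) :
    let D : Ω → ℝ := fun ω => Z ω * D1 ω + (1 - Z ω) * D0 ω
    let Y : Ω → ℝ := fun ω => D ω * Y1 ω + (1 - D ω) * Y0 ω
    (∫ ω, Z ω * Y ω / π (X ω) ∂μ - ∫ ω, (1 - Z ω) * Y ω / (1 - π (X ω)) ∂μ =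
      ∫ ω, (D1 ω - D0 ω) * (Y1 ω - Y0 ω) ∂μ) ∧
    (∫ ω, Z ω * D ω / π (X ω) ∂μ - ∫ ω, (1 - Z ω) * D ω / (1 - π (X ω)) ∂μ =
      ∫ ω, (D1 ω - D0 ω) ∂μ) ∧
    ((∀ᵐ ω ∂μ, D0 ω ≤ D1 ω) → 0 < μ {ω | D0 ω < D1 ω} →
      (∫ ω, Z ω * Y ω / π (X ω) ∂μ - ∫ ω, (1 - Z ω) * Y ω / (1 - π (X ω)) ∂μ) /
        (∫ ω, Z ω * D ω / π (X ω) ∂μ - ∫ ω, (1 - Z ω) * D ω / (1 - π (X ω)) ∂μ) =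
      (∫ ω in {ω | D0 ω < D1 ω}, (Y1 ω - Y0 ω) ∂μ) / (μ {ω | D0 ω < D1 ω}).toReal) := by
  intro D Y
  have hDdef : D = fun ω => Z ω * D1 ω + (1 - Z ω) * D0 ω := rfl
  have hYdef : Y = fun ω => D ω * Y1 ω + (1 - D ω) * Y0 ω := rfl
  set W : Ω → ℝ × ℝ × ℝ × ℝ := fun ω => (Y0 ω, Y1 ω, D0 ω, D1 ω) with hW
  have hWm : Measurable W := hY0m.prodMk (hY1m.prodMk (hD0m.prodMk hD1m))
  have hπ0 : ∀ x, (0:ℝ) < π x := fun x => hδ.trans (hπδ x).1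
  have hπ1' : ∀ x, (0:ℝ) < 1 - π x := fun x => by linarith [(hπδ x).2]
  have hπ01 : ∀ x, 0 ≤ π x ∧ π x ≤ 1 := fun x => ⟨(hπ0 x).le, by linarith [hπ1' x]⟩
  set π' : α → ℝ := fun x => 1 - π x with hπ'def
  have hπ'm : Measurable π' := measurable_const.sub hπ
  have hπ'01 : ∀ x, 0 ≤ π' x ∧ π' x ≤ 1 := fun x => ⟨(hπ1' x).le, by
    have := hπ0 x; simp only [hπ'def]; linarith⟩
  set Z' : Ω → ℝ := fun ω => 1 - Z ω with hZ'def
  have hZ'm : Measurable Z' := measurable_const.sub hZm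
  have hZ'01 : ∀ ω, Z' ω = 0 ∨ Z' ω = 1 := fun ω => by
    rcases hZ01 ω with h | h
    · right; simp [hZ'def, h]
    · left; simp [hZ'def, h]
  have hZint : Integrable Z μ := (integrable_const (1:ℝ)).mono' hZm.aestronglyMeasurable
    (ae_of_all μ fun ω => by rcases hZ01 ω with h | h <;> simp [h])
  have hle := hX.comap_le
  haveI : SigmaFinite (μ.trim hle) := inferInstance
  have hcond' : μ[Z' | MeasurableSpace.comap X inferInstance] =ᵐ[μ] fun ω => π' (X ω) := by
    have hZ'eq : Z' = (fun _ : Ω => (1:ℝ)) - Z := by funext ω; simp [hZ'def]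
    rw [hZ'eq]
    have hsub := condExp_sub (m := MeasurableSpace.comap X inferInstance) (μ := μ)
      (integrable_const (1:ℝ)) hZint
    have hc := condExp_const (μ := μ) hle (1:ℝ)
    filter_upwards [hsub, hcond] with ω h1 h2
    rw [h1, Pi.sub_apply, hc, h2]
  have hci' : CondIndepFun (MeasurableSpace.comap X inferInstance) hX.comap_le W Z' μ :=
    hci.comp measurable_id (measurable_const.sub measurable_id)
  -- the four integral identities
  have hbound1 : ∀ (f : Ω → ℝ), (∀ ω, f ω = 0 ∨ f ω = 1) → ∀ᵐ ω ∂μ, ‖f ω‖ ≤ 1 :=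
    fun f hf => ae_of_all μ fun ω => by rcases hf ω with h | h <;> simp [h]
  have hG1int : Integrable (fun ω => D1 ω * Y1 ω + (1 - D1 ω) * Y0 ω) μ := by
    refine (hY1int.bdd_mul (c := 1) hD1m.aestronglyMeasurable (hbound1 D1 hD1b)).add
      (hY0int.bdd_mul (c := 1) (measurable_const.sub hD1m).aestronglyMeasurable ?_)
    exact ae_of_all μ fun ω => by rcases hD1b ω with h | h <;> simp [h]
  have hG0int : Integrable (fun ω => D0 ω * Y1 ω + (1 - D0 ω) * Y0 ω) μ := by
    refine (hY1int.bdd_mul (c := 1) hD0m.aestronglyMeasurable (hbound1 D0 hD0b)).add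
      (hY0int.bdd_mul (c := 1) (measurable_const.sub hD0m).aestronglyMeasurable ?_)
    exact ae_of_all μ fun ω => by rcases hD0b ω with h | h <;> simp [h]
  have hD1int : Integrable D1 μ := (integrable_const (1:ℝ)).mono'
    hD1m.aestronglyMeasurable (hbound1 D1 hD1b)
  have hD0int : Integrable D0 μ := (integrable_const (1:ℝ)).mono'
    hD0m.aestronglyMeasurable (hbound1 D0 hD0b)
  have q1 : ∫ ω, Z ω * Y ω / π (X ω) ∂μ
      = ∫ ω, (D1 ω * Y1 ω + (1 - D1 ω) * Y0 ω) ∂μ := by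
    have hF : Measurable (fun p : α × (ℝ × ℝ × ℝ × ℝ) =>
        (p.2.2.2.2 * p.2.2.1 + (1 - p.2.2.2.2) * p.2.1) / π p.1) := by fun_prop
    calc ∫ ω, Z ω * Y ω / π (X ω) ∂μ
        = ∫ ω, Z ω * ((D1 ω * Y1 ω + (1 - D1 ω) * Y0 ω) / π (X ω)) ∂μ := by
          refine integral_congr_ae (ae_of_all _ fun ω => ?_)
          dsimp only
          rcases hZ01 ω with h | h
          · rw [h]; simp
          · have hDω : D ω = D1 ω := by simp only [hDdef, h]; ring
            have hYω : Y ω = D1 ω * Y1 ω + (1 - D1 ω) * Y0 ω := by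
              simp only [hYdef, hDω]
            rw [h, hYω, one_mul, one_mul]
      _ = ∫ ω, π (X ω) * ((D1 ω * Y1 ω + (1 - D1 ω) * Y0 ω) / π (X ω)) ∂μ :=
          ipw_integral μ X Z W π hX hZm hWm hπ hZ01 hπ01 hcond hci _ hF
      _ = ∫ ω, (D1 ω * Y1 ω + (1 - D1 ω) * Y0 ω) ∂μ := by
          refine integral_congr_ae (ae_of_all _ fun ω => ?_)
          dsimp only
          rw [mul_comm, div_mul_cancel₀ _ (hπ0 (X ω)).ne']
  have q2 : ∫ ω, (1 - Z ω) * Y ω / (1 - π (X ω)) ∂μ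
      = ∫ ω, (D0 ω * Y1 ω + (1 - D0 ω) * Y0 ω) ∂μ := by
    have hF : Measurable (fun p : α × (ℝ × ℝ × ℝ × ℝ) =>
        (p.2.2.2.1 * p.2.2.1 + (1 - p.2.2.2.1) * p.2.1) / π' p.1) := by fun_prop
    calc ∫ ω, (1 - Z ω) * Y ω / (1 - π (X ω)) ∂μ
        = ∫ ω, Z' ω * ((D0 ω * Y1 ω + (1 - D0 ω) * Y0 ω) / π' (X ω)) ∂μ := by
          refine integral_congr_ae (ae_of_all _ fun ω => ?_)
          dsimp only
          rcases hZ01 ω with h | h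
          · have hDω : D ω = D0 ω := by simp only [hDdef, h]; ring
            have hYω : Y ω = D0 ω * Y1 ω + (1 - D0 ω) * Y0 ω := by
              simp only [hYdef, hDω]
            simp only [hZ'def, hπ'def, h, hYω]
            norm_num
          · simp only [hZ'def, h]; simp
      _ = ∫ ω, π' (X ω) * ((D0 ω * Y1 ω + (1 - D0 ω) * Y0 ω) / π' (X ω)) ∂μ :=
          ipw_integral μ X Z' W π' hX hZ'm hWm hπ'm hZ'01 hπ'01 hcond' hci' _ hF
      _ = ∫ ω, (D0 ω * Y1 ω + (1 - D0 ω) * Y0 ω) ∂μ := by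
          refine integral_congr_ae (ae_of_all _ fun ω => ?_)
          dsimp only
          rw [mul_comm, div_mul_cancel₀ _ (hπ1' (X ω)).ne']
  have q3 : ∫ ω, Z ω * D ω / π (X ω) ∂μ = ∫ ω, D1 ω ∂μ := by
    have hF : Measurable (fun p : α × (ℝ × ℝ × ℝ × ℝ) => p.2.2.2.2 / π p.1) := by fun_prop
    calc ∫ ω, Z ω * D ω / π (X ω) ∂μ
        = ∫ ω, Z ω * (D1 ω / π (X ω)) ∂μ := by
          refine integral_congr_ae (ae_of_all _ fun ω => ?_)
          dsimp only
          rcases hZ01 ω with h | h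
          · rw [h]; simp
          · have hDω : D ω = D1 ω := by simp only [hDdef, h]; ring
            rw [h, hDω, one_mul, one_mul]
      _ = ∫ ω, π (X ω) * (D1 ω / π (X ω)) ∂μ :=
          ipw_integral μ X Z W π hX hZm hWm hπ hZ01 hπ01 hcond hci _ hF
      _ = ∫ ω, D1 ω ∂μ := by
          refine integral_congr_ae (ae_of_all _ fun ω => ?_)
          dsimp only
          rw [mul_comm, div_mul_cancel₀ _ (hπ0 (X ω)).ne']
  have q4 : ∫ ω, (1 - Z ω) * D ω / (1 - π (X ω)) ∂μ = ∫ ω, D0 ω ∂μ := by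
    have hF : Measurable (fun p : α × (ℝ × ℝ × ℝ × ℝ) => p.2.2.2.1 / π' p.1) := by fun_prop
    calc ∫ ω, (1 - Z ω) * D ω / (1 - π (X ω)) ∂μ
        = ∫ ω, Z' ω * (D0 ω / π' (X ω)) ∂μ := by
          refine integral_congr_ae (ae_of_all _ fun ω => ?_)
          dsimp only
          rcases hZ01 ω with h | h
          · have hDω : D ω = D0 ω := by simp only [hDdef, h]; ring
            simp only [hZ'def, hπ'def, h, hDω]
            norm_num
          · simp only [hZ'def, h]; simp
      _ = ∫ ω, π' (X ω) * (D0 ω / π' (X ω)) ∂μ :=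
          ipw_integral μ X Z' W π' hX hZ'm hWm hπ'm hZ'01 hπ'01 hcond' hci' _ hF
      _ = ∫ ω, D0 ω ∂μ := by
          refine integral_congr_ae (ae_of_all _ fun ω => ?_)
          dsimp only
          rw [mul_comm, div_mul_cancel₀ _ (hπ1' (X ω)).ne']
  have hfirst : ∫ ω, Z ω * Y ω / π (X ω) ∂μ - ∫ ω, (1 - Z ω) * Y ω / (1 - π (X ω)) ∂μ
      = ∫ ω, (D1 ω - D0 ω) * (Y1 ω - Y0 ω) ∂μ := by
    rw [q1, q2, ← integral_sub hG1int hG0int]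
    refine integral_congr_ae (ae_of_all _ fun ω => ?_)
    dsimp only
    ring
  have hsecond : ∫ ω, Z ω * D ω / π (X ω) ∂μ - ∫ ω, (1 - Z ω) * D ω / (1 - π (X ω)) ∂μ
      = ∫ ω, (D1 ω - D0 ω) ∂μ := by
    rw [q3, q4, ← integral_sub hD1int hD0int]
  refine ⟨hfirst, hsecond, fun hmono hpos => ?_⟩
  have hS : MeasurableSet {ω | D0 ω < D1 ω} := measurableSet_lt hD0m hD1m
  have hnum : ∫ ω, (D1 ω - D0 ω) * (Y1 ω - Y0 ω) ∂μ
      = ∫ ω in {ω | D0 ω < D1 ω}, (Y1 ω - Y0 ω) ∂μ := by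
    rw [← integral_indicator hS]
    refine integral_congr_ae ?_
    filter_upwards [hmono] with ω h
    rcases hD0b ω with h0 | h0 <;> rcases hD1b ω with h1 | h1
    · simp [Set.indicator_apply, Set.mem_setOf_eq, h0, h1]
    · simp [Set.indicator_apply, Set.mem_setOf_eq, h0, h1]
    · exfalso; rw [h0, h1] at h; linarith
    · simp [Set.indicator_apply, Set.mem_setOf_eq, h0, h1]
  have hden : ∫ ω, (D1 ω - D0 ω) ∂μ = (μ {ω | D0 ω < D1 ω}).toReal := by
    have heq : ∫ ω, (D1 ω - D0 ω) ∂μ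
        = ∫ ω, ({ω | D0 ω < D1 ω}).indicator (fun _ => (1:ℝ)) ω ∂μ := by
      refine integral_congr_ae ?_
      filter_upwards [hmono] with ω h
      rcases hD0b ω with h0 | h0 <;> rcases hD1b ω with h1 | h1
      · simp [Set.indicator_apply, Set.mem_setOf_eq, h0, h1]
      · simp [Set.indicator_apply, Set.mem_setOf_eq, h0, h1]
      · exfalso; rw [h0, h1] at h; linarith
      · simp [Set.indicator_apply, Set.mem_setOf_eq, h0, h1]
    rw [heq, integral_indicator hS, setIntegral_const, smul_eq_mul, mul_one, measureReal_def]
  rw [hfirst, hsecond, hnum, hden]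
end
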